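/- Let 1 → A → Γ →^{pr} Q → 1 be a short exact sequence of groups in which A is free abelian of finite rank, and let any subgroup of Q act on A by conjugation in Γ. Let k be a natural number and let H̄ ⊆ Γ be a subgroup with A ∩ H̄ ⊆ kA, where kA := {a^k : a ∈ A}. Assume that the group cohomology groups H¹(pr(H̄); A) and H²(pr(H̄); A) are finite and that k ≡ 1 mod |Hⁱ(pr(H̄); A)| for i = 1, 2. Let φ : Γ → Γ be a group homomorphism with φ(a) = a^k for all a ∈ A and pr ∘ φ = pr. Then H̄ is subconjugated to the image of φ: there exists γ ∈ Γ with γ H̄ γ⁻¹ ⊆ im(φ). -/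

import Mathlib

open groupCohomology

set_option maxHeartbeats 1000000


/-- Let `1 → A → Γ →^{pr} Q → 1` be a short exact sequence of groups with
`A` free abelian of finite rank, and let subgroups of `Q` act on `A` by conjugation in `Γ`
(the representation `ρ` below, restricted to subgroups).  Let `k` be a natural number and
`H̄ ⊆ Γ` a subgroup with `A ∩ H̄ ⊆ kA`.  Assume `H¹(pr(H̄); A)` and `H²(pr(H̄); A)` are
finite and `k ≡ 1 mod |Hⁱ(pr(H̄); A)|` for `i = 1, 2`.  Let `φ : Γ → Γ` be a group
homomorphism with `φ(a) = a^k` for all `a ∈ A` and `pr ∘ φ = pr`.  Then `H̄` is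
subconjugated to `im(φ)`. -/
theorem subconjugated_to_image_of_pseudo_expansive
    (m : ℕ) (A Γ Q : Type) [CommGroup A] [Group Γ] [Group Q]
    (hfree : Nonempty (A ≃* Multiplicative (Fin m → ℤ)))
    (ι : A →* Γ) (pr : Γ →* Q)
    (hι : Function.Injective ι) (hpr : Function.Surjective pr)
    (hexact : pr.ker = ι.range)
    (ρ : Representation ℤ Q (Additive A))
    (hρ : ∀ (γ : Γ) (a : A),
      ι (Additive.toMul (ρ (pr γ) (Additive.ofMul a))) = γ * ι a * γ⁻¹)
    (k : ℕ) (Hbar : Subgroup Γ)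
    (hHbar : ∀ a : A, ι a ∈ Hbar → ∃ b : A, a = b ^ k)
    (h1fin : Finite (groupCohomology (Rep.of (ρ.comp (Subgroup.map pr Hbar).subtype)) 1))
    (h2fin : Finite (groupCohomology (Rep.of (ρ.comp (Subgroup.map pr Hbar).subtype)) 2))
    (hk1 : k ≡ 1 [MOD
      Nat.card (groupCohomology (Rep.of (ρ.comp (Subgroup.map pr Hbar).subtype)) 1)])
    (hk2 : k ≡ 1 [MOD
      Nat.card (groupCohomology (Rep.of (ρ.comp (Subgroup.map pr Hbar).subtype)) 2)])
    (φ : Γ →* Γ)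
    (hφA : ∀ a : A, φ (ι a) = ι (a ^ k))
    (hφpr : ∀ g : Γ, pr (φ g) = pr g) :
    ∃ γ : Γ, ∀ h ∈ Hbar, γ * h * γ⁻¹ ∈ φ.range := by
  classical
  obtain ⟨eA⟩ := hfree
  set Qb := Subgroup.map pr Hbar with hQbdef
  set M : Rep ℤ Qb := Rep.of (ρ.comp Qb.subtype) with hMdef
  -- basic facts
  have hprι : ∀ a : A, pr (ι a) = 1 := by
    intro a
    have : ι a ∈ ι.range := ⟨a, rfl⟩
    rw [← hexact] at this
    exact this
  have hMρ : ∀ (q : Qb) (v : Additive A), M.ρ q v = ρ (q : Q) v := fun q v => rfl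
  -- the multiplicative 1-cocycle  g ↦ g (φ g)⁻¹
  have hex : ∀ g : Γ, ∃ a : A, ι a = g * (φ g)⁻¹ := by
    intro g
    have hmem : g * (φ g)⁻¹ ∈ pr.ker := by
      simp [MonoidHom.mem_ker, hφpr]
    rw [hexact] at hmem
    obtain ⟨a, ha⟩ := hmem
    exact ⟨a, ha⟩
  set c0 : Γ → A := fun g => (hex g).choose with hc0def
  have hc0 : ∀ g, ι (c0 g) = g * (φ g)⁻¹ := fun g => (hex g).choose_spec
  set cV : Γ → Additive A := fun g => Additive.ofMul (c0 g) with hcVdef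
  have hιcV : ∀ g : Γ, ι (Additive.toMul (cV g)) = g * (φ g)⁻¹ := fun g => hc0 g
  have hρ' : ∀ (g : Γ) (v : Additive A),
      ι (Additive.toMul (ρ (pr g) v)) = g * ι (Additive.toMul v) * g⁻¹ :=
    fun g v => hρ g (Additive.toMul v)
  have hcoc : ∀ g h : Γ, cV (g * h) = ρ (pr g) (cV h) + cV g := by
    intro g h
    apply hι
    show ι (Additive.toMul (cV (g * h))) = ι (Additive.toMul (ρ (pr g) (cV h) + cV g))
    rw [toMul_add, map_mul, hιcV (g * h), hρ', hιcV h, hιcV g, map_mul, mul_inv_rev]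
    group
  have hc0ι : ∀ a : A, c0 (ι a) = a * (a ^ k)⁻¹ := by
    intro a
    apply hι
    rw [hc0, hφA, ← map_inv, ← map_mul]
  -- the section of `pr` over `Qb` with values in `Hbar`
  have hsec : ∀ q : Qb, ∃ g, g ∈ Hbar ∧ pr g = (q : Q) := by
    intro q
    obtain ⟨g, hg, he⟩ := q.2
    exact ⟨g, hg, he⟩
  set s : Qb → Γ := fun q => (hsec q).choose with hsdef
  have hs1 : ∀ q, s q ∈ Hbar := fun q => (hsec q).choose_spec.1
  have hs2 : ∀ q, pr (s q) = (q : Q) := fun q => (hsec q).choose_spec.2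
  set c : Qb → Additive A := fun q => cV (s q) with hcdef
  -- torsion-freeness (used only when k ≠ 0)
  have hcancel : k ≠ 0 → ∀ x : Additive A, k • x = 0 → x = 0 := by
    intro hkz x hx
    have h1 : Additive.toMul x ^ k = 1 := by
      have := congrArg Additive.toMul hx
      simpa [toMul_nsmul] using this
    have h2 : eA (Additive.toMul x) ^ k = 1 := by rw [← map_pow, h1, map_one]
    have h3 : (k : ℤ) • Multiplicative.toAdd (eA (Additive.toMul x)) = 0 := by
      rw [Nat.cast_smul_eq_nsmul]
      have := congrArg Multiplicative.toAdd h2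
      simpa [toAdd_pow] using this
    rcases smul_eq_zero.mp h3 with h | h
    · exact absurd (Int.natCast_eq_zero.mp h) hkz
    · have h4 : eA (Additive.toMul x) = 1 := by
        have : Multiplicative.toAdd (eA (Additive.toMul x)) = Multiplicative.toAdd
            (1 : Multiplicative (Fin m → ℤ)) := by simpa using h
        exact Multiplicative.toAdd.injective this
      have h5 : Additive.toMul x = 1 := eA.injective (by rw [h4, map_one])
      have := congrArg Additive.ofMul h5
      simpa using this
  -- comparing the cocycle on an element of `Hbar` with its value on the section
  have hfiber : ∀ (g : Γ), g ∈ Hbar → ∀ (q : Qb), pr g = (q : Q) →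
      ∃ w : Additive A, cV g = c q + k • w := by
    intro g hg q hq
    have hker : (s q)⁻¹ * g ∈ ι.range := by
      rw [← hexact, MonoidHom.mem_ker, map_mul, map_inv, hs2, hq, inv_mul_cancel]
    obtain ⟨a, ha⟩ := hker
    have haH : ι a ∈ Hbar := by
      rw [ha]; exact Hbar.mul_mem (Hbar.inv_mem (hs1 q)) hg
    obtain ⟨b, hb⟩ := hHbar a haH
    have hg' : g = s q * ι a := by rw [ha]; group
    refine ⟨ρ (q : Q) (Additive.ofMul (b * (b ^ k)⁻¹)), ?_⟩
    rw [hg', hcoc, hs2]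
    have hιa : cV (ι a) = k • Additive.ofMul (b * (b ^ k)⁻¹) := by
      show Additive.ofMul (c0 (ι a)) = _
      rw [hc0ι, ← ofMul_pow]
      congr 1
      rw [hb, mul_pow, inv_pow]
    rw [hιa, map_nsmul]
    abel
  -- `c` is a cocycle modulo k-divisible elements
  have hstep5 : ∀ q1 q2 : Qb, ∃ w : Additive A,
      ρ ((q1 : Q)) (c q2) - c (q1 * q2) + c q1 = k • w := by
    intro q1 q2
    have hmem : s q1 * s q2 ∈ Hbar := Hbar.mul_mem (hs1 q1) (hs1 q2)
    have hpr12 : pr (s q1 * s q2) = ((q1 * q2 : Qb) : Q) := by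
      rw [map_mul, hs2, hs2]; rfl
    obtain ⟨w, hw⟩ := hfiber _ hmem (q1 * q2) hpr12
    refine ⟨w, ?_⟩
    have hco := hcoc (s q1) (s q2)
    rw [hs2] at hco
    rw [hco] at hw
    have hre : ρ ((q1 : Q)) (c q2) - c (q1 * q2) + c q1
        = (ρ ((q1 : Q)) (c q2) + c q1) - c (q1 * q2) := by abel
    rw [hre, hw]
    abel
  -- finiteness and killing lemmas for H1 and H2
  have e1 : (groupCohomology M 1 : Type) ≃ groupCohomology.H1 M :=
    Equiv.refl _
  have e2 : (groupCohomology M 2 : Type) ≃ groupCohomology.H2 M :=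
    Equiv.refl _
  have hfin1 : Finite (groupCohomology.H1 M) := Finite.of_equiv _ e1
  have hfin2 : Finite (groupCohomology.H2 M) := Finite.of_equiv _ e2
  have hcard1 : Nat.card (groupCohomology.H1 M) = Nat.card (groupCohomology M 1) :=
    (Nat.card_congr e1).symm
  have hcard2 : Nat.card (groupCohomology.H2 M) = Nat.card (groupCohomology M 2) :=
    (Nat.card_congr e2).symm
  -- the main cohomological step
  have hmain : ∃ (b : Additive A) (w : Qb → Additive A),
      ∀ q : Qb, c q - (ρ ((q : Q)) b - b) = k • w q := by
    rcases Nat.eq_zero_or_pos k with hk0 | hkpos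
    · -- k = 0 : H¹ is trivial and c is an honest cocycle
      have hdvd : Nat.card (groupCohomology M 1) ∣ 1 := by
        have := (Nat.modEq_iff_dvd' (by omega : k ≤ 1)).mp hk1
        simpa [hk0] using this
      have hone : Nat.card (groupCohomology.H1 M) = 1 := by
        rw [hcard1]; exact Nat.dvd_one.mp hdvd
      have hsub : Subsingleton (groupCohomology.H1 M) :=
        (Nat.card_eq_one_iff_unique.mp hone).1
      have hcmem : (c : Qb → M) ∈ cocycles₁ M := by
        rw [mem_cocycles₁_def]
        intro g h
        obtain ⟨w, hw⟩ := hstep5 g h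
        rw [hMρ]
        rw [hk0, zero_smul] at hw
        exact hw
      have hzero : H1π M ⟨c, hcmem⟩ = 0 := Subsingleton.elim _ _
      have hcb : ((⟨c, hcmem⟩ : cocycles₁ M) : Qb → M) ∈ coboundaries₁ M :=
        (H1π_eq_zero_iff _).mp hzero
      obtain ⟨x, hx⟩ := hcb
      replace hx : ∀ g, M.ρ g x - x = ((⟨c, hcmem⟩ : cocycles₁ M) : Qb → M) g :=
        fun g => congrFun hx g
      refine ⟨x, 0, fun q => ?_⟩
      have := hx q
      rw [hMρ] at this
      rw [show ((⟨c, hcmem⟩ : cocycles₁ M) : Qb → M) q = c q from rfl] at this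
      rw [this]
      simp [hk0]
    · -- k ≥ 1
      have hkz : k ≠ 0 := hkpos.ne'
      have hdvd1 : Nat.card (groupCohomology.H1 M) ∣ k - 1 := by
        rw [hcard1]; exact (Nat.modEq_iff_dvd' hkpos).mp hk1.symm
      have hdvd2 : Nat.card (groupCohomology.H2 M) ∣ k - 1 := by
        rw [hcard2]; exact (Nat.modEq_iff_dvd' hkpos).mp hk2.symm
      have hkill1 : ∀ x : groupCohomology.H1 M, (k - 1) • x = 0 := by
        intro x
        obtain ⟨t, ht⟩ := hdvd1
        rw [ht, mul_comm, mul_smul, card_nsmul_eq_zero', smul_zero]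
      have hkill2 : ∀ x : groupCohomology.H2 M, (k - 1) • x = 0 := by
        intro x
        obtain ⟨t, ht⟩ := hdvd2
        rw [ht, mul_comm, mul_smul, card_nsmul_eq_zero', smul_zero]
      choose e he using hstep5
      set E : Qb × Qb → Additive A := fun p => e p.1 p.2 with hEdef
      have hkE : (d₁₂ M).hom (c : Qb → M) = k • (E : Qb × Qb → M) := by
        funext p
        rw [d₁₂_hom_apply, hMρ, Pi.smul_apply]
        exact he p.1 p.2
      have hEmem : (E : Qb × Qb → M) ∈ cocycles₂ M := by
        have h0 : (d₂₃ M).hom (k • (E : Qb × Qb → M)) = 0 := by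
          rw [← hkE]
          exact LinearMap.ext_iff.1 (congrArg ModuleCat.Hom.hom (d₁₂_comp_d₂₃ M)) (c : Qb → M)
        rw [map_nsmul] at h0
        have hzero : (d₂₃ M).hom (E : Qb × Qb → M) = 0 := by
          funext p
          refine hcancel hkz _ ?_
          have := congrFun h0 p
          exact this
        exact LinearMap.mem_ker.mpr hzero
      -- k • [E] = 0 in H², hence [E] = 0
      have hkξ : k • (H2π M ⟨E, hEmem⟩) = 0 := by
        rw [← map_nsmul]
        apply (H2π_eq_zero_iff _).mpr
        refine ⟨c, funext fun ⟨g, h⟩ => ?_⟩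
        show ρ ((g : Q)) (c h) - c (g * h) + c g = (k • E) (g, h)
        rw [Pi.smul_apply]
        exact he g h
      have hξ : H2π M ⟨E, hEmem⟩ = 0 := by
        have h1 := hkill2 (H2π M ⟨E, hEmem⟩)
        have h2 : k • (H2π M ⟨E, hEmem⟩)
            = (k - 1) • (H2π M ⟨E, hEmem⟩) + H2π M ⟨E, hEmem⟩ := by
          rw [← succ_nsmul]
          congr 1
          omega
        rw [h2, h1, zero_add] at hkξ
        exact hkξ
      have hEcb : ((⟨E, hEmem⟩ : cocycles₂ M) : Qb × Qb → M) ∈ coboundaries₂ M :=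
        (H2π_eq_zero_iff _).mp hξ
      obtain ⟨u0, hu⟩ := hEcb
      replace hu : ∀ g h, M.ρ g (u0 h) - u0 (g * h) + u0 g
          = ((⟨E, hEmem⟩ : cocycles₂ M) : Qb × Qb → M) (g, h) :=
        fun g h => congrFun hu (g, h)
      set u : Qb → Additive A := (u0 : Qb → Additive A) with hueq
      have hu' : ∀ g h : Qb, ρ ((g : Q)) (u h) - u (g * h) + u g = E (g, h) := by
        intro g h
        have h2 := hu g h
        rw [hMρ] at h2
        rw [hueq]
        exact h2
      set c' : Qb → Additive A := fun q => c q - k • u q with hc'def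
      have hc'mem : (c' : Qb → M) ∈ cocycles₁ M := by
        rw [mem_cocycles₁_def]
        intro g h
        rw [hMρ]
        have key : ρ ((g : Q)) (c' h) - c' (g * h) + c' g
            = (ρ ((g : Q)) (c h) - c (g * h) + c g)
              - k • (ρ ((g : Q)) (u h) - u (g * h) + u g) := by
          show ρ ((g : Q)) (c h - k • u h) - (c (g * h) - k • u (g * h)) + (c g - k • u g) = _
          simp only [map_sub, map_nsmul, smul_sub, smul_add]
          abel
        rw [key, he g h, hu' g h]
        show k • e g h - k • E (g, h) = 0
        rw [hEdef]
        abel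
      -- (k-1) • [c'] = 0 in H¹
      have hc'cb : ⇑((k - 1) • (⟨c', hc'mem⟩ : cocycles₁ M)) ∈ coboundaries₁ M := by
        have hmk : H1π M ((k - 1) • (⟨c', hc'mem⟩ : cocycles₁ M)) = 0 := by
          rw [map_nsmul]
          exact hkill1 _
        exact (H1π_eq_zero_iff _).mp hmk
      obtain ⟨b0, hb⟩ := hc'cb
      replace hb : ∀ q, M.ρ q b0 - b0 = ⇑((k - 1) • (⟨c', hc'mem⟩ : cocycles₁ M)) q :=
        fun q => congrFun hb q
      set b : Additive A := (b0 : Additive A) with hbeq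
      have hb' : ∀ q : Qb, ρ ((q : Q)) b - b = (k - 1) • c' q := by
        intro q
        have h2 := hb q
        rw [hMρ] at h2
        rw [hbeq]
        exact h2
      refine ⟨-b, fun q => c' q + u q, fun q => ?_⟩
      have hsm : c' q + (k - 1) • c' q = k • c' q := by
        have h2 : k • c' q = (k - 1) • c' q + c' q := by
          rw [← succ_nsmul]
          congr 1
          omega
        rw [h2]
        abel
      have hcq : c q = c' q + k • u q := by
        show c q = (c q - k • u q) + k • u q
        abel
      calc c q - (ρ ((q : Q)) (-b) - (-b))
          = c q + (ρ ((q : Q)) b - b) := by rw [map_neg]; abel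
        _ = (c' q + k • u q) + (k - 1) • c' q := by rw [hcq, hb' q]
        _ = (c' q + (k - 1) • c' q) + k • u q := by abel
        _ = k • c' q + k • u q := by rw [hsm]
        _ = k • (c' q + u q) := by rw [smul_add]
  -- final assembly
  obtain ⟨b, w, hbw⟩ := hmain
  refine ⟨ι (Additive.toMul b), fun h hh => ?_⟩
  set γ : Γ := ι (Additive.toMul b) with hγdef
  have hq : pr h ∈ Qb := ⟨h, hh, rfl⟩
  set q : Qb := ⟨pr h, hq⟩ with hqdef
  obtain ⟨w1, hw1⟩ := hfiber h hh q rfl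
  have hγ1 : pr γ = 1 := hprι _
  have hcVγ : cV γ = b - k • b := by
    have h1 : cV γ = Additive.ofMul (Additive.toMul b * (Additive.toMul b ^ k)⁻¹) := by
      show Additive.ofMul (c0 (ι (Additive.toMul b))) = _
      rw [hc0ι]
    rw [h1]
    rw [show Additive.toMul b ^ k = Additive.toMul (k • b) from (toMul_nsmul k b).symm]
    rw [show (Additive.toMul (k • b))⁻¹ = Additive.toMul (-(k • b)) from rfl]
    rw [← toMul_add]
    rw [show Additive.ofMul (Additive.toMul (b + -(k • b))) = b + -(k • b) from rfl]
    abel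
  have hcVγi : cV γ⁻¹ = k • b - b := by
    have hγi : γ⁻¹ = ι (Additive.toMul (-b)) := by
      rw [show Additive.toMul (-b) = (Additive.toMul b)⁻¹ from rfl, map_inv]
    rw [hγi]
    have h1 : cV (ι (Additive.toMul (-b)))
        = Additive.ofMul (Additive.toMul (-b) * (Additive.toMul (-b) ^ k)⁻¹) := by
      show Additive.ofMul (c0 (ι (Additive.toMul (-b)))) = _
      rw [hc0ι]
    rw [h1]
    rw [show Additive.toMul (-b) ^ k = Additive.toMul (k • (-b)) from (toMul_nsmul k (-b)).symm]
    rw [show (Additive.toMul (k • (-b)))⁻¹ = Additive.toMul (-(k • (-b))) from rfl]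
    rw [← toMul_add]
    rw [show Additive.ofMul (Additive.toMul (-b + -(k • (-b)))) = -b + -(k • (-b)) from rfl]
    rw [smul_neg]
    abel
  have hz : cV (γ * h * γ⁻¹) = k • (ρ (pr h) b + w q + w1 - b) := by
    rw [hcoc (γ * h) γ⁻¹, hcoc γ h]
    rw [map_mul, hγ1, one_mul, map_one]
    have hcVh : cV h = (ρ (pr h) b - b) + k • w q + k • w1 := by
      rw [hw1]
      have := hbw q
      have hcq : c q = (ρ (pr h) b - b) + k • w q := by
        have h2 : c q - (ρ ((q : Q)) b - b) = k • w q := hbw q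
        have h3 : (q : Q) = pr h := rfl
        rw [h3] at h2
        rw [← h2]
        abel
      rw [hcq]
    rw [hcVγ, hcVγi, hcVh, Module.End.one_apply]
    simp only [map_sub, map_nsmul, map_add, smul_add, smul_sub]
    all_goals abel
  -- conclude membership in the range of φ
  set z : Additive A := ρ (pr h) b + w q + w1 - b with hzdef
  have hfin : γ * h * γ⁻¹ = φ (ι (Additive.toMul z) * (γ * h * γ⁻¹)) := by
    rw [map_mul, hφA]
    have h1 : ι (Additive.toMul z ^ k) = ι (Additive.toMul (k • z)) := by
      rw [toMul_nsmul]
    rw [h1, ← hz, hιcV]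
    group
  exact ⟨_, hfin.symm⟩
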